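/- Let Ω ⊆ ℝ^n be a bounded nonempty open set with closure K and frontier ∂Ω, and let a < b be real numbers. Let f : [a,b] × K → ℝ be continuous, suppose the restriction of f to [a,b] × ∂Ω is a constant function, suppose f is C² on (a,b] × Ω (jointly in (t,x)), and suppose ∂_t f(t,x) ≤ Δ_x f(t,x) for all (t,x) ∈ (a,b] × Ω, where Δ_x is the Euclidean Laplacian in x. Then the function t ↦ sup_{p ∈ K} f(t,p) is monotone nonincreasing on [a,b]. (Euclidean-domain version of the parabolic maximum principle, Lemma 2.6.) -/

import Mathlib

open Set Filter Topology

/-- If `φ` has a local max at `0`, `φ' = ψ` near `0`, and `ψ` has derivative `c` at `0`,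
then `c ≤ 0`. -/
lemma aux_second_deriv_nonpos {φ ψ : ℝ → ℝ} {c : ℝ}
    (hmax : IsLocalMax φ 0)
    (hφ : ∀ᶠ r in 𝓝 (0:ℝ), HasDerivAt φ (ψ r) r)
    (hψ : HasDerivAt ψ c 0) : c ≤ 0 := by
  by_contra hc
  push_neg at hc
  have h0 : HasDerivAt φ (ψ 0) 0 := hφ.self_of_nhds
  have hψ0 : ψ 0 = 0 := by rw [← h0.deriv]; exact hmax.deriv_eq_zero
  have hslope : Tendsto (slope ψ 0) (𝓝[≠] (0:ℝ)) (𝓝 c) :=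
    hasDerivAt_iff_tendsto_slope.mp hψ
  have hpos : ∀ᶠ r in 𝓝[≠] (0:ℝ), 0 < slope ψ 0 r := hslope.eventually (eventually_gt_nhds hc)
  rw [eventually_nhdsWithin_iff] at hpos
  have hall : ∀ᶠ r in 𝓝 (0:ℝ), (r ∈ ({0}ᶜ : Set ℝ) → 0 < slope ψ 0 r) ∧
      HasDerivAt φ (ψ r) r ∧ φ r ≤ φ 0 := hpos.and (hφ.and hmax)
  obtain ⟨δ, hδpos, hδ⟩ := Metric.eventually_nhds_iff.mp hall
  set r₀ : ℝ := δ / 2 with hr₀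
  have hr₀pos : 0 < r₀ := by positivity
  have hmem : ∀ r ∈ Icc (0:ℝ) r₀, dist r 0 < δ := by
    intro r hr
    rw [Real.dist_eq, sub_zero, abs_of_nonneg hr.1]
    calc r ≤ δ / 2 := hr.2
      _ < δ := by linarith
  have hcont : ContinuousOn φ (Icc 0 r₀) := fun r hr =>
    ((hδ (hmem r hr)).2.1.differentiableAt.continuousAt).continuousWithinAt
  have hderiv : ∀ r ∈ Ioo (0:ℝ) r₀, HasDerivAt φ (ψ r) r := fun r hr =>
    (hδ (hmem r ⟨hr.1.le, hr.2.le⟩)).2.1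
  obtain ⟨ξ, hξ, hξeq⟩ := exists_hasDerivAt_eq_slope φ ψ hr₀pos hcont hderiv
  have hψξ : 0 < ψ ξ := by
    have h1 := (hδ (hmem ξ ⟨hξ.1.le, hξ.2.le⟩)).1 (by simp [ne_of_gt hξ.1])
    rw [slope_def_field] at h1
    have : 0 < (ψ ξ - ψ 0) / (ξ - 0) := h1
    rw [hψ0, sub_zero, sub_zero] at this
    exact (div_pos_iff.mp this).resolve_right (fun h => absurd hξ.1 (not_lt.mpr h.2.le)) |>.1
  have hφr₀ : φ r₀ ≤ φ 0 := (hδ (hmem r₀ ⟨hr₀pos.le, le_refl _⟩)).2.2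
  rw [hξeq] at hψξ
  have : (φ r₀ - φ 0) / (r₀ - 0) ≤ 0 :=
    div_nonpos_of_nonpos_of_nonneg (by linarith) (by linarith)
  linarith

/-- If `φ` is maximal at `t₁` on `[t₀, t₁]` with `t₀ < t₁` and differentiable at `t₁`,
its derivative there is nonnegative. -/
lemma aux_deriv_nonneg_of_isMaxOn {φ : ℝ → ℝ} {d t₀ t₁ : ℝ} (h01 : t₀ < t₁)
    (hd : HasDerivAt φ d t₁) (hmax : ∀ s ∈ Icc t₀ t₁, φ s ≤ φ t₁) : 0 ≤ d := by
  have hs := hasDerivAt_iff_tendsto_slope.mp hd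
  have h1 : Tendsto (slope φ t₁) (𝓝[<] t₁) (𝓝 d) :=
    hs.mono_left (nhdsWithin_mono _ (fun x hx => ne_of_lt hx))
  refine ge_of_tendsto h1 ?_
  filter_upwards [Ioo_mem_nhdsLT_of_mem ⟨h01, le_refl t₁⟩] with s hs'
  rw [slope_def_field]
  refine div_nonneg_iff.mpr (Or.inr ⟨?_, ?_⟩)
  · have := hmax s ⟨hs'.1.le, hs'.2.le⟩; linarith
  · linarith [hs'.2]

/-- Second directional derivative at an interior local maximum is nonpositive. -/
lemma aux_secondDirectional_nonpos {E : Type*} [NormedAddCommGroup E] [NormedSpace ℝ E]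
    {h : E → ℝ} {y : E} (v : E) (hh : ContDiffAt ℝ 2 h y) (hmax : IsLocalMax h y) :
    fderiv ℝ (fderiv ℝ h) y v v ≤ 0 := by
  obtain ⟨u, hu_mem, hu⟩ := hh.contDiffOn (le_refl 2) (by simp)
  set U := interior u with hUdef
  have hyU : y ∈ U := mem_interior_iff_mem_nhds.mpr hu_mem
  have hUo : IsOpen U := isOpen_interior
  have hhU : ContDiffOn ℝ 2 h U := hu.mono interior_subset
  have hdiff : ∀ z ∈ U, DifferentiableAt ℝ h z := fun z hz =>
    ((hhU.differentiableOn (by norm_num)).differentiableAt (hUo.mem_nhds hz))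
  set B := fderiv ℝ (fderiv ℝ h) y with hBdef
  have hB : HasFDerivAt (fderiv ℝ h) B y := by
    have h1 : ContDiffAt ℝ 1 (fderiv ℝ h) y := hh.fderiv_right (by norm_num)
    exact (h1.differentiableAt (by norm_num)).hasFDerivAt
  set L : ℝ → E := fun r => y + r • v with hLdef
  have hL0 : L 0 = y := by simp [hLdef]
  have hLc : Continuous L := by fun_prop
  have hL : ∀ r : ℝ, HasDerivAt L v r := fun r => by
    have := ((hasDerivAt_id r).smul_const v).const_add y; simp only [one_smul] at this; exact this
  set ψ : ℝ → ℝ := fun r => fderiv ℝ h (L r) v with hψdef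
  have hφψ : ∀ᶠ r in 𝓝 (0:ℝ), HasDerivAt (fun r => h (L r)) (ψ r) r := by
    have hUn : U ∈ 𝓝 (L 0) := by rw [hL0]; exact hUo.mem_nhds hyU
    filter_upwards [(hLc.tendsto 0) hUn] with r hr
    exact ((hdiff _ hr).hasFDerivAt).comp_hasDerivAt r (hL r)
  have hψ' : HasDerivAt ψ (B v v) 0 := by
    have h1 : HasDerivAt (fun r => fderiv ℝ h (L r)) (B v) 0 :=
      (show HasFDerivAt (fderiv ℝ h) B (L 0) by rwa [hL0]).comp_hasDerivAt 0 (hL 0)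
    simpa using h1.clm_apply (hasDerivAt_const 0 v)
  have hmaxφ : IsLocalMax (fun r => h (L r)) 0 := by
    have ht : Filter.Tendsto L (𝓝 0) (𝓝 y) := by rw [← hL0]; exact hLc.tendsto 0
    have h2 : ∀ᶠ r in 𝓝 (0:ℝ), h (L r) ≤ h y := ht.eventually hmax
    exact h2.mono fun r hr => by simpa [hL0] using hr
  exact aux_second_deriv_nonpos hmaxφ hφψ hψ'

/-- The Euclidean Laplacian `Δf = Σ_i ∂²f/∂x_i²` (componentwise for vector-valued `f`). -/
noncomputable def lap {n : ℕ} {F : Type*} [NormedAddCommGroup F] [NormedSpace ℝ F]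
    (f : EuclideanSpace ℝ (Fin n) → F) (x : EuclideanSpace ℝ (Fin n)) : F :=
  ∑ i : Fin n, iteratedFDeriv ℝ 2 f x (fun _ => EuclideanSpace.single i 1)

/-- Euclidean-domain version of the parabolic maximum principle (Lemma 2.6):
if `f` is continuous on `[a,b] × closure Ω`, constant on `[a,b] × ∂Ω`, `C²` on `(a,b] × Ω`,
and satisfies `∂_t f ≤ Δ_x f` there, then `t ↦ sup_{closure Ω} f(t, ·)` is nonincreasing. -/
theorem parabolic_maximum_principle (n : ℕ) (Ω : Set (EuclideanSpace ℝ (Fin n)))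
    (hΩo : IsOpen Ω) (hΩb : Bornology.IsBounded Ω) (hΩne : Ω.Nonempty)
    (a b : ℝ) (hab : a < b) (f : ℝ → EuclideanSpace ℝ (Fin n) → ℝ)
    (hcont : ContinuousOn (fun p : ℝ × EuclideanSpace ℝ (Fin n) => f p.1 p.2)
      (Set.Icc a b ×ˢ closure Ω))
    (hconst : ∃ c : ℝ, ∀ t ∈ Set.Icc a b, ∀ x ∈ frontier Ω, f t x = c)
    (hC2 : ContDiffOn ℝ 2 (fun p : ℝ × EuclideanSpace ℝ (Fin n) => f p.1 p.2)
      (Set.Ioc a b ×ˢ Ω))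
    (hineq : ∀ t ∈ Set.Ioc a b, ∀ x ∈ Ω, deriv (fun s => f s x) t ≤ lap (f t) x) :
    AntitoneOn (fun t => sSup (f t '' closure Ω)) (Set.Icc a b) := by
  obtain ⟨c, hc⟩ := hconst
  set K := closure Ω with hKdef
  have hKcpt : IsCompact K := hΩb.isCompact_closure
  have hKne : K.Nonempty := hΩne.closure
  have hΩK : Ω ⊆ K := subset_closure
  have hslice : ∀ t ∈ Set.Icc a b, ContinuousOn (f t) K := by
    intro t ht
    have h1 : ContinuousOn (fun x : EuclideanSpace ℝ (Fin n) =>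
        (fun p : ℝ × EuclideanSpace ℝ (Fin n) => f p.1 p.2) (t, x)) K :=
      hcont.comp ((continuous_const.prodMk continuous_id).continuousOn)
        (fun x hx => ⟨ht, hx⟩)
    exact h1
  have hbdd : ∀ t ∈ Set.Icc a b, BddAbove (f t '' K) := fun t ht =>
    (hKcpt.image_of_continuousOn (hslice t ht)).bddAbove
  intro t₁ ht₁ t₂ ht₂ h12
  rcases eq_or_lt_of_le h12 with rfl | hlt
  · exact le_refl _
  simp only
  -- Key claim: for every ε > 0 and t ∈ [t₁, t₂), the sup at time t is controlled.
  have key : ∀ ε > 0, ∀ t ∈ Set.Ico t₁ t₂, ∀ x ∈ K,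
      f t x ≤ sSup (f t₁ '' K) + ε * (t - t₁) := by
    intro ε hε t ht x hx
    set g : ℝ × EuclideanSpace ℝ (Fin n) → ℝ :=
      fun p => f p.1 p.2 - ε * (p.1 - t₁) with hgdef
    have htb : t ≤ b := le_trans ht.2.le ht₂.2
    have htab : Set.Icc t₁ t ⊆ Set.Icc a b := Set.Icc_subset_Icc ht₁.1 htb
    have hgc : ContinuousOn g (Set.Icc t₁ t ×ˢ K) := by
      apply ContinuousOn.sub
      · exact hcont.mono (Set.prod_mono htab subset_rfl)
      · exact (by fun_prop : Continuous fun p : ℝ × EuclideanSpace ℝ (Fin n) =>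
          ε * (p.1 - t₁)).continuousOn
    have hne : (Set.Icc t₁ t ×ˢ K).Nonempty :=
      ⟨(t₁, hKne.some), ⟨Set.left_mem_Icc.mpr ht.1, hKne.some_mem⟩⟩
    obtain ⟨⟨s, y⟩, hsy, hmax⟩ := (isCompact_Icc.prod hKcpt).exists_isMaxOn hne hgc
    obtain ⟨hs, hy⟩ := hsy
    have hsab : s ∈ Set.Icc a b := htab hs
    have hSt1 : ∀ z ∈ K, f t₁ z ≤ sSup (f t₁ '' K) := fun z hz =>
      le_csSup (hbdd t₁ ht₁) (Set.mem_image_of_mem _ hz)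
    have hgoal : g (s, y) ≤ sSup (f t₁ '' K) := by
      by_cases hyΩ : y ∈ Ω
      · rcases eq_or_lt_of_le hs.1 with heq | hs1
        · -- s = t₁
          have heq' : s = t₁ := heq.symm
          have hgs : g (s, y) = f t₁ y := by rw [hgdef]; simp [heq']
          rw [hgs]; exact hSt1 y hy
        · -- interior maximum: contradiction with the parabolic inequality
          exfalso
          have hsa : a < s := lt_of_le_of_lt ht₁.1 hs1
          have hsb : s < b := lt_of_le_of_lt hs.2 (lt_of_lt_of_le ht.2 ht₂.2)
          have hopen : IsOpen (Set.Ioo a b ×ˢ Ω) := isOpen_Ioo.prod hΩo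
          have hC2' : ContDiffOn ℝ 2 (fun p : ℝ × EuclideanSpace ℝ (Fin n) => f p.1 p.2)
              (Set.Ioo a b ×ˢ Ω) :=
            hC2.mono (Set.prod_mono Set.Ioo_subset_Ioc_self subset_rfl)
          have hFat : ContDiffAt ℝ 2 (fun p : ℝ × EuclideanSpace ℝ (Fin n) => f p.1 p.2)
              (s, y) := hC2'.contDiffAt (hopen.mem_nhds ⟨⟨hsa, hsb⟩, hyΩ⟩)
          have hdiffF : DifferentiableAt ℝ
              (fun p : ℝ × EuclideanSpace ℝ (Fin n) => f p.1 p.2) (s, y) :=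
            hFat.differentiableAt (by norm_num)
          -- time derivative
          have hcurve : HasDerivAt (fun s' : ℝ => ((s', y) : ℝ × EuclideanSpace ℝ (Fin n)))
              (1, 0) s := (hasDerivAt_id s).prodMk (hasDerivAt_const s y)
          have hφt : HasDerivAt (fun s' => f s' y)
              (fderiv ℝ (fun p : ℝ × EuclideanSpace ℝ (Fin n) => f p.1 p.2) (s, y) (1, 0))
              s := by have := hdiffF.hasFDerivAt.comp_hasDerivAt s hcurve; exact this
          set d := fderiv ℝ (fun p : ℝ × EuclideanSpace ℝ (Fin n) => f p.1 p.2) (s, y)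
            (1, 0) with hddef
          have hφg : HasDerivAt (fun s' => f s' y - ε * (s' - t₁)) (d - ε) s := by
            have h2 : HasDerivAt (fun s' : ℝ => ε * (s' - t₁)) ε s := by
              simpa using ((hasDerivAt_id s).sub_const t₁).const_mul ε
            exact hφt.sub h2
          have hd : ε ≤ d := by
            have h3 : ∀ s' ∈ Set.Icc t₁ s, f s' y - ε * (s' - t₁) ≤ f s y - ε * (s - t₁) := by
              intro s' hs'
              have hmem : ((s', y) : ℝ × EuclideanSpace ℝ (Fin n)) ∈ Set.Icc t₁ t ×ˢ K :=
                Set.mk_mem_prod ⟨hs'.1, le_trans hs'.2 hs.2⟩ hy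
              exact hmax hmem
            have := aux_deriv_nonneg_of_isMaxOn hs1 hφg h3
            linarith
          -- spatial part
          have hlap : deriv (fun s' => f s' y) s ≤ lap (f s) y :=
            hineq s ⟨hsa, hsb.le⟩ y hyΩ
          rw [hφt.deriv] at hlap
          have hslC2 : ContDiffAt ℝ 2 (f s) y := by
            have h4 : ContDiffAt ℝ 2 (fun x : EuclideanSpace ℝ (Fin n) =>
                ((s, x) : ℝ × EuclideanSpace ℝ (Fin n))) y :=
              contDiffAt_const.prodMk contDiffAt_id
            exact hFat.comp y h4
          have hmaxsl : IsLocalMax (f s) y := by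
            filter_upwards [hΩo.mem_nhds hyΩ] with z hz
            have h' : f s z - ε * (s - t₁) ≤ f s y - ε * (s - t₁) :=
              hmax (Set.mk_mem_prod hs (hΩK hz))
            linarith
          have hlapnp : lap (f s) y ≤ 0 := by
            rw [lap]
            apply Finset.sum_nonpos
            intro i _
            rw [iteratedFDeriv_two_apply]
            exact aux_secondDirectional_nonpos _ hslC2 hmaxsl
          linarith
      · -- boundary maximum
        have hyf : y ∈ frontier Ω := by
          rw [frontier, hΩo.interior_eq]; exact ⟨hy, hyΩ⟩
        have h1 : f s y = c := hc s hsab y hyf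
        have h2 : f t₁ y = c := hc t₁ ht₁ y hyf
        have h3 : g (s, y) ≤ c := by
          simp only [hgdef, h1]
          nlinarith [hs.1, hε]
        calc g (s, y) ≤ c := h3
          _ = f t₁ y := h2.symm
          _ ≤ sSup (f t₁ '' K) := hSt1 y hy
    have h5 : f t x - ε * (t - t₁) ≤ f s y - ε * (s - t₁) :=
      hmax (Set.mk_mem_prod (Set.right_mem_Icc.mpr ht.1) hx)
    have hgoal' : f s y - ε * (s - t₁) ≤ sSup (f t₁ '' K) := hgoal
    linarith
  -- Pass to the limit t → t₂⁻.
  have key2 : ∀ ε > 0, sSup (f t₂ '' K) ≤ sSup (f t₁ '' K) + ε * (t₂ - t₁) := by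
    intro ε hε
    refine csSup_le (hKne.image _) ?_
    rintro z ⟨x, hx, rfl⟩
    have hcw : ContinuousWithinAt (fun t => f t x) (Set.Icc a b) t₂ :=
      (hcont.comp ((continuous_id.prodMk continuous_const).continuousOn)
        (fun t htt => ⟨htt, hx⟩)) t₂ ht₂
    have hsub : Set.Ico t₁ t₂ ⊆ Set.Icc a b := fun r hr =>
      ⟨le_trans ht₁.1 hr.1, le_trans hr.2.le ht₂.2⟩
    have hcw2 : Filter.Tendsto (fun t => f t x) (𝓝[Set.Ico t₁ t₂] t₂) (𝓝 (f t₂ x)) :=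
      hcw.mono_left (nhdsWithin_mono _ hsub)
    have hnb : (𝓝[Set.Ico t₁ t₂] t₂).NeBot := by
      apply mem_closure_iff_nhdsWithin_neBot.mp
      rw [closure_Ico hlt.ne]
      exact Set.right_mem_Icc.mpr hlt.le
    refine le_of_tendsto hcw2 ?_
    filter_upwards [self_mem_nhdsWithin] with t ht'
    have h6 := key ε hε t ht' x hx
    have h7 : ε * (t - t₁) ≤ ε * (t₂ - t₁) := by nlinarith [ht'.2, hε]
    linarith
  -- Conclude.
  refine le_of_forall_pos_le_add ?_
  intro ε hε
  have hd2 : 0 < t₂ - t₁ := sub_pos.mpr hlt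
  have h8 := key2 (ε / (t₂ - t₁)) (div_pos hε hd2)
  have h9 : ε / (t₂ - t₁) * (t₂ - t₁) = ε := div_mul_cancel₀ ε hd2.ne'
  linarith
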